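/- Let ψ be a unit vector in a finite-dimensional complex Hilbert space, S a finite spanning set of unit vectors, F(ψ) = max_{φ∈S}|⟨φ,ψ⟩|², and ξ(ψ) the minimum of ‖c‖₁² over decompositions ψ = Σ c_j φ_j with φ_j ∈ S. If Q is a finite group of unitaries with |ψ⟩⟨ψ| = (1/|Q|)Σ_{q∈Q} q and each q maps S into S (up to phase), then ξ(ψ) = 1/F(ψ). -/

import Mathlib

open scoped BigOperators

/-- For a state `ψ` stabilized on average by a finite group of unitaries mapping the
set `S` of stabilizer states into itself up to phase, the stabilizer extent equals
the inverse stabilizer fidelity: `ξ(ψ) = 1/F(ψ)`. -/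
theorem xi_eq_inv_fidelity
    {V : Type*} [NormedAddCommGroup V] [InnerProductSpace ℂ V] [FiniteDimensional ℂ V]
    (S : Finset V) (hSne : S.Nonempty) (hSunit : ∀ φ ∈ S, ‖φ‖ = 1)
    (hSspan : Submodule.span ℂ (S : Set V) = ⊤)
    (ψ : V) (hψ : ‖ψ‖ = 1)
    (Q : Subgroup (V ≃ₗᵢ[ℂ] V)) [Fintype Q]
    (hproj : ∀ v : V,
      ((Fintype.card Q : ℂ))⁻¹ • ∑ q : Q, (q : V ≃ₗᵢ[ℂ] V) v = (inner ℂ ψ v : ℂ) • ψ)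
    (hclosed : ∀ q : Q, ∀ φ ∈ S, ∃ (l : ℂ) (φ' : V),
      ‖l‖ = 1 ∧ φ' ∈ S ∧ (q : V ≃ₗᵢ[ℂ] V) φ = l • φ') :
    sInf { r : ℝ | ∃ c : V → ℂ, ψ = ∑ φ ∈ S, c φ • φ ∧ r = (∑ φ ∈ S, ‖c φ‖) ^ 2 }
      = 1 / (S.sup' hSne fun φ => ‖(inner ℂ φ ψ : ℂ)‖ ^ 2) := by
  classical
  set F : ℝ := S.sup' hSne fun φ => ‖(inner ℂ φ ψ : ℂ)‖ ^ 2 with hFdef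
  -- F > 0
  have hex : ∃ φ ∈ S, (inner ℂ ψ φ : ℂ) ≠ 0 := by
    by_contra h
    push_neg at h
    have hker : (S : Set V) ⊆ ↑(LinearMap.ker ((innerSL ℂ ψ : V →L[ℂ] ℂ) : V →ₗ[ℂ] ℂ)) := by
      intro φ hφ
      simpa using h φ hφ
    have hle := Submodule.span_le.mpr hker
    rw [hSspan] at hle
    have : (inner ℂ ψ ψ : ℂ) = 0 := hle (Submodule.mem_top (x := ψ))
    rw [inner_self_eq_norm_sq_to_K, hψ] at this
    norm_num at this
  obtain ⟨φ₁, hφ₁S, hφ₁⟩ := hex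
  have hF0 : 0 < F := by
    have hle : ‖(inner ℂ φ₁ ψ : ℂ)‖ ^ 2 ≤ F :=
      Finset.le_sup' (fun φ => ‖(inner ℂ φ ψ : ℂ)‖ ^ 2) hφ₁S
    have h0 : (0:ℝ) < ‖(inner ℂ ψ φ₁ : ℂ)‖ := norm_pos_iff.mpr hφ₁
    have h0' : (0:ℝ) < ‖(inner ℂ φ₁ ψ : ℂ)‖ ^ 2 := by
      rw [norm_inner_symm]; positivity
    linarith
  -- maximizer
  obtain ⟨φ₀, hφ₀S, hφ₀⟩ := Finset.exists_mem_eq_sup' hSne fun φ => ‖(inner ℂ φ ψ : ℂ)‖ ^ 2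
  set a : ℂ := (inner ℂ ψ φ₀ : ℂ) with hadef
  have hna : ‖a‖ ^ 2 = F := by
    rw [hadef, norm_inner_symm, ← hφ₀]
  have hnapos : 0 < ‖a‖ := by nlinarith [norm_nonneg a]
  have ha0 : a ≠ 0 := norm_pos_iff.mp hnapos
  set N : ℕ := Fintype.card Q with hNdef
  have hN : 0 < N := Fintype.card_pos
  have hNC : (N : ℂ) ≠ 0 := Nat.cast_ne_zero.mpr hN.ne'
  have hNR : (N : ℝ) ≠ 0 := Nat.cast_ne_zero.mpr hN.ne'
  -- choice of phases and images
  choose l φ' hl hφ'S heq using fun q : Q => hclosed q φ₀ hφ₀S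
  -- the witness decomposition
  set c : V → ℂ := fun φ => ∑ q : Q, if φ' q = φ then l q / ((N : ℂ) * a) else 0 with hcdef
  have hsum : ∑ q : Q, (q : V ≃ₗᵢ[ℂ] V) φ₀ = ((N : ℂ) * a) • ψ := by
    have h := hproj φ₀
    rw [← hadef] at h
    have := congrArg (fun v => (N : ℂ) • v) h
    simp only [smul_smul, mul_inv_cancel₀ hNC, one_smul] at this
    exact this
  have hdecomp : ψ = ∑ φ ∈ S, c φ • φ := by
    have key : ∑ φ ∈ S, c φ • φ
        = ∑ q : Q, (l q / ((N : ℂ) * a)) • φ' q := by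
      simp only [hcdef, Finset.sum_smul]
      rw [Finset.sum_comm]
      refine Finset.sum_congr rfl fun q _ => ?_
      rw [show (∑ φ ∈ S, (if φ' q = φ then l q / ((N : ℂ) * a) else 0) • φ)
          = ∑ φ ∈ S, (if φ' q = φ then (l q / ((N : ℂ) * a)) • φ else 0) by
        refine Finset.sum_congr rfl fun φ _ => ?_
        split <;> simp]
      rw [Finset.sum_ite_eq S (φ' q) (fun φ => (l q / ((N : ℂ) * a)) • φ)]
      simp [hφ'S q]
    have key2 : ∑ q : Q, (l q / ((N : ℂ) * a)) • φ' q = ψ := by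
      have : ∀ q : Q, (l q / ((N : ℂ) * a)) • φ' q
          = (((N : ℂ) * a))⁻¹ • ((q : V ≃ₗᵢ[ℂ] V) φ₀) := by
        intro q
        rw [heq q, smul_smul, div_eq_mul_inv, mul_comm]
      rw [Finset.sum_congr rfl fun q _ => this q, ← Finset.smul_sum, hsum, smul_smul,
        inv_mul_cancel₀ (by exact mul_ne_zero hNC ha0), one_smul]
    rw [key, key2]
  have hcbound : ∑ φ ∈ S, ‖c φ‖ ≤ 1 / ‖a‖ := by
    have h1 : ∀ φ ∈ S, ‖c φ‖ ≤ ∑ q : Q, (if φ' q = φ then 1 / ((N : ℝ) * ‖a‖) else 0) := by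
      intro φ _
      refine (norm_sum_le _ _).trans ?_
      refine Finset.sum_le_sum fun q _ => ?_
      split
      · rw [norm_div, hl q, norm_mul]
        simp
      · simp
    calc ∑ φ ∈ S, ‖c φ‖
        ≤ ∑ φ ∈ S, ∑ q : Q, (if φ' q = φ then 1 / ((N : ℝ) * ‖a‖) else 0) :=
          Finset.sum_le_sum h1
      _ = ∑ q : Q, ∑ φ ∈ S, (if φ' q = φ then 1 / ((N : ℝ) * ‖a‖) else 0) :=
          Finset.sum_comm
      _ = ∑ q : Q, 1 / ((N : ℝ) * ‖a‖) := by
          refine Finset.sum_congr rfl fun q _ => ?_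
          rw [Finset.sum_ite_eq S (φ' q) (fun _ => 1 / ((N : ℝ) * ‖a‖))]
          simp [hφ'S q]
      _ = 1 / ‖a‖ := by
          rw [Finset.sum_const, Finset.card_univ, ← hNdef, nsmul_eq_mul]
          rw [mul_one_div, div_mul_cancel_left₀ hNR, one_div]
  -- lower bound for every element of the set
  have hlb : ∀ r ∈ { r : ℝ | ∃ c : V → ℂ, ψ = ∑ φ ∈ S, c φ • φ ∧ r = (∑ φ ∈ S, ‖c φ‖) ^ 2 },
      1 / F ≤ r := by
    rintro r ⟨d, hd, rfl⟩
    have h1 : (1 : ℂ) = ∑ φ ∈ S, d φ * (inner ℂ ψ φ : ℂ) := by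
      have hinner : (inner ℂ ψ ψ : ℂ) = 1 := by
        rw [inner_self_eq_norm_sq_to_K, hψ]; norm_num
      have h2 := congrArg (fun v => (inner ℂ ψ v : ℂ)) hd
      simp only [inner_sum, inner_smul_right] at h2
      rw [← hinner]; exact h2
    have h2 : (1 : ℝ) ≤ (∑ φ ∈ S, ‖d φ‖) * ‖a‖ := by
      have h3 : (1 : ℝ) = ‖(1 : ℂ)‖ := by simp
      rw [h3, h1]
      calc ‖∑ φ ∈ S, d φ * (inner ℂ ψ φ : ℂ)‖
          ≤ ∑ φ ∈ S, ‖d φ * (inner ℂ ψ φ : ℂ)‖ := norm_sum_le _ _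
        _ ≤ ∑ φ ∈ S, ‖d φ‖ * ‖a‖ := by
            refine Finset.sum_le_sum fun φ hφ => ?_
            rw [norm_mul]
            refine mul_le_mul_of_nonneg_left ?_ (norm_nonneg _)
            have hsq : ‖(inner ℂ φ ψ : ℂ)‖ ^ 2 ≤ F :=
              Finset.le_sup' (fun φ => ‖(inner ℂ φ ψ : ℂ)‖ ^ 2) hφ
            rw [← hna] at hsq
            rw [norm_inner_symm]
            nlinarith [norm_nonneg (inner ℂ φ ψ : ℂ), norm_nonneg a]
        _ = (∑ φ ∈ S, ‖d φ‖) * ‖a‖ := by rw [← Finset.sum_mul]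
    have hds : 0 ≤ ∑ φ ∈ S, ‖d φ‖ := Finset.sum_nonneg fun _ _ => norm_nonneg _
    rw [← hna]
    rw [div_le_iff₀ (by positivity)]
    nlinarith
  have hne : ((∑ φ ∈ S, ‖c φ‖) ^ 2) ∈
      { r : ℝ | ∃ c : V → ℂ, ψ = ∑ φ ∈ S, c φ • φ ∧ r = (∑ φ ∈ S, ‖c φ‖) ^ 2 } :=
    ⟨c, hdecomp, rfl⟩
  refine le_antisymm ?_ (le_csInf ⟨_, hne⟩ hlb)
  refine csInf_le_of_le ⟨1 / F, hlb⟩ hne ?_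
  have hcs : 0 ≤ ∑ φ ∈ S, ‖c φ‖ := Finset.sum_nonneg fun _ _ => norm_nonneg _
  calc (∑ φ ∈ S, ‖c φ‖) ^ 2 ≤ (1 / ‖a‖) ^ 2 := by
        refine pow_le_pow_left₀ hcs hcbound 2
    _ = 1 / F := by rw [← hna]; field_simp
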